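/- First-order memory term for Burgers: with the projection P replacing unresolved variables by zero, P L Q L u_{0k} = −ik ∑_{p+q=k, p∈F, q∈G} (P u_{0p}) (P L u_{0q}), i.e., twice the convolution of the resolved first-order part with the unresolved part of the quadratic term. -/
import Mathlib


open MvPolynomial Complex

private lemma pdX (i j : ℤ) : pderiv i (X j : MvPolynomial ℤ ℂ) = if j = i then 1 else 0 := by
  simp [Pi.single_apply]

private lemma half_combine (a : ℂ) (t : MvPolynomial ℤ ℂ) :
    C (-(Complex.I * a / 2)) * (t + t) = C (-(Complex.I * a)) * t := by
  rw [← two_mul, ← mul_assoc]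
  congr 1
  rw [show ((2 : MvPolynomial ℤ ℂ)) = C 2 from (map_ofNat (C : ℂ →+* MvPolynomial ℤ ℂ) 2).symm,
    ← C_mul]
  congr 1
  ring

private lemma pd_gadget (S : Finset ℤ) (j m : ℤ) (hj : j ∈ S) (c : ℤ → Prop) [DecidablePred c] :
    pderiv j (∑ p ∈ S, if m - p ∈ S ∧ c p ∧ c (m - p) then X p * X (m - p) else (0 : MvPolynomial ℤ ℂ))
      = (if m - j ∈ S ∧ c j ∧ c (m - j) then X (m - j) else 0)
        + (if m - j ∈ S ∧ c j ∧ c (m - j) then X (m - j) else 0) := by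
  rw [map_sum]
  have hsplit : ∀ (c' : Prop) [Decidable c'] (a b : MvPolynomial ℤ ℂ),
      (if c' then a + b else 0) = (if c' then a else 0) + (if c' then b else 0) := by
    intros c' _ a b; split <;> simp
  simp only [apply_ite (pderiv j), map_zero, pderiv_mul, pdX, ite_mul, mul_ite, one_mul,
    mul_one, zero_mul, mul_zero, hsplit, Finset.sum_add_distrib]
  congr 1
  · have : ∀ p ∈ S, (if m - p ∈ S ∧ c p ∧ c (m - p) then if p = j then X (m - p) else 0 else (0 : MvPolynomial ℤ ℂ))
        = (if p = j then (if m - p ∈ S ∧ c p ∧ c (m - p) then X (m - p) else 0) else 0) := by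
      intro p _; by_cases h : p = j <;> simp [h]
    rw [Finset.sum_congr rfl this, Finset.sum_ite_eq' S j
      (fun p => if m - p ∈ S ∧ c p ∧ c (m - p) then X (m - p) else 0), if_pos hj]
  · have : ∀ p ∈ S, (if m - p ∈ S ∧ c p ∧ c (m - p) then if m - p = j then X p else 0 else (0 : MvPolynomial ℤ ℂ))
        = (if p = m - j then (if j ∈ S ∧ c (m - j) ∧ c j then X (m - j) else 0) else 0) := by
      intro p _
      by_cases h : p = m - j
      · subst h
        have h2 : m - (m - j) = j := by ring
        simp [h2]
      · have h2 : m - p ≠ j := by omega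
        simp [h, h2]
    rw [Finset.sum_congr rfl this, Finset.sum_ite_eq' S (m - j)
      (fun _ => if j ∈ S ∧ c (m - j) ∧ c j then X (m - j) else 0)]
    by_cases hm : m - j ∈ S
    · simp [hm, hj, and_comm]
    · simp [hm]


/-- First-order memory term for Burgers.  Working in the polynomial algebra in the mode
variables `u_{0k}`, `k ∈ F ∪ G`, with `R_k = −(ik/2) ∑_{p+q=k} X_p X_q`,
`L f = ∑_k R_k ∂f/∂X_k`, `P` the substitution `X_q ↦ 0` for `q ∈ G`, and `Q = I − P`,
one has `P L Q L u_{0k} = −ik ∑_{p+q=k, p∈F, q∈G} (P u_{0p}) (P L u_{0q})`. -/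
theorem burgers_first_order_memory
    (F G : Finset ℤ) (hFG : Disjoint F G) (k : ℤ) (hk : k ∈ F) :
    let R : ℤ → MvPolynomial ℤ ℂ := fun j =>
      C (-(Complex.I * (j : ℂ) / 2)) *
        ∑ p ∈ F ∪ G, ∑ q ∈ F ∪ G, if p + q = j then X p * X q else 0
    let L : MvPolynomial ℤ ℂ → MvPolynomial ℤ ℂ := fun f =>
      ∑ j ∈ F ∪ G, R j * pderiv j f
    let P : MvPolynomial ℤ ℂ → MvPolynomial ℤ ℂ :=
      aeval (fun j : ℤ => if j ∈ G then (0 : MvPolynomial ℤ ℂ) else X j)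
    P (L (L (X k) - P (L (X k)))) =
      C (-(Complex.I * (k : ℂ))) *
        ∑ p ∈ F, ∑ q ∈ G, if p + q = k then P (X p) * P (L (X q)) else 0 := by
  intro R L P
  have hFS : ∀ {p : ℤ}, p ∈ F → p ∈ F ∪ G := fun hp => Finset.mem_union_left _ hp
  have hGS : ∀ {q : ℤ}, q ∈ G → q ∈ F ∪ G := fun hq => Finset.mem_union_right _ hq
  have hFnG : ∀ {p : ℤ}, p ∈ F → p ∉ G := fun hp => Finset.disjoint_left.mp hFG hp
  -- unfolding facts (definitional)
  have hLdef : ∀ f, L f = ∑ j ∈ F ∪ G, R j * pderiv j f := fun _ => rfl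
  have hPmul : ∀ a b, P (a * b) = P a * P b := fun a b => map_mul _ a b
  have hPsub : ∀ a b, P (a - b) = P a - P b := fun a b => map_sub _ a b
  have hPsum : ∀ (s : Finset ℤ) (g : ℤ → MvPolynomial ℤ ℂ),
      P (∑ j ∈ s, g j) = ∑ j ∈ s, P (g j) := fun s g => map_sum _ g s
  have hPzero : P 0 = 0 := map_zero _
  have hPC : ∀ a : ℂ, P (C a) = C a := fun a => by
    show aeval _ (C a) = C a
    rw [aeval_C, MvPolynomial.algebraMap_eq]
  have hPX : ∀ i : ℤ, P (X i) = if i ∈ G then 0 else X i := fun i => aeval_X _ i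
  -- single-sum form of R
  have hR : ∀ m : ℤ, R m = C (-(Complex.I * (m : ℂ) / 2)) *
      ∑ p ∈ F ∪ G, if m - p ∈ F ∪ G ∧ (fun _ : ℤ => True) p ∧ (fun _ : ℤ => True) (m - p)
        then X p * X (m - p) else 0 := by
    intro m
    show C (-(Complex.I * (m : ℂ) / 2)) *
        ∑ p ∈ F ∪ G, ∑ q ∈ F ∪ G, (if p + q = m then X p * X q else 0) = _
    simp only [and_true]
    congr 1
    refine Finset.sum_congr rfl fun p _ => ?_
    rw [← Finset.sum_ite_eq' (F ∪ G) (m - p) (fun q => X p * X q)]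
    exact Finset.sum_congr rfl fun q _ => if_congr (by omega) rfl rfl
  -- derivative of R m
  have hpd : ∀ m : ℤ, ∀ j ∈ F ∪ G, pderiv j (R m)
      = C (-(Complex.I * (m : ℂ))) * (if m - j ∈ F ∪ G then X (m - j) else 0) := by
    intro m j hj
    rw [hR m, pderiv_C_mul, pd_gadget (F ∪ G) j m hj (fun _ => True)]
    simp only [and_true]
    exact half_combine _ _
  -- P (R k) in gadget form
  have hPRk : P (R k) = C (-(Complex.I * (k : ℂ) / 2)) *
      ∑ p ∈ F ∪ G, if k - p ∈ F ∪ G ∧ (fun i : ℤ => i ∉ G) p ∧ (fun i : ℤ => i ∉ G) (k - p)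
        then X p * X (k - p) else 0 := by
    rw [hR k, hPmul, hPC, hPsum]
    congr 1
    refine Finset.sum_congr rfl fun p _ => ?_
    rw [apply_ite P, hPmul, hPX, hPX, hPzero]
    by_cases h1 : k - p ∈ F ∪ G <;> by_cases h2 : p ∈ G <;> by_cases h3 : k - p ∈ G <;>
      simp [h1, h2, h3]
  have hpdP : ∀ j ∈ F ∪ G, pderiv j (P (R k))
      = C (-(Complex.I * (k : ℂ))) *
        (if k - j ∈ F ∪ G ∧ j ∉ G ∧ k - j ∉ G then X (k - j) else 0) := by
    intro j hj
    rw [hPRk, pderiv_C_mul, pd_gadget (F ∪ G) j k hj (fun i => i ∉ G)]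
    exact half_combine _ _
  -- L (X m) = R m
  have hLX : ∀ m ∈ F ∪ G, L (X m) = R m := by
    intro m hm
    rw [hLdef]
    simp only [pdX, mul_ite, mul_one, mul_zero]
    rw [Finset.sum_ite_eq (F ∪ G) m R, if_pos hm]
  -- the common form
  set T : MvPolynomial ℤ ℂ := C (-(Complex.I * (k : ℂ))) *
      ∑ q ∈ G, if k - q ∈ F then X (k - q) * P (R q) else 0 with hT
  -- RHS = T
  have hRHS : C (-(Complex.I * (k : ℂ))) *
      (∑ p ∈ F, ∑ q ∈ G, if p + q = k then P (X p) * P (L (X q)) else 0) = T := by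
    rw [hT]
    congr 1
    rw [Finset.sum_comm]
    refine Finset.sum_congr rfl fun q hq => ?_
    rw [hLX q (hGS hq)]
    refine Eq.trans (Finset.sum_congr rfl fun p hp => ?_)
      (Finset.sum_ite_eq' F (k - q) (fun p => X p * P (R q)))
    rw [hPX p, if_neg (hFnG hp)]
    exact if_congr (by omega) rfl rfl
  -- LHS = T
  have hLHS : P (L (R k - P (R k))) = T := by
    rw [hLdef, hPsum]
    have key : ∀ j ∈ F ∪ G,
        P (R j * pderiv j (R k - P (R k)))
          = P (R j) * (C (-(Complex.I * (k : ℂ))) *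
              (if j ∈ G ∧ k - j ∈ F then X (k - j) else 0)) := by
      intro j hj
      have hsub : pderiv j (R k - P (R k)) = pderiv j (R k) - pderiv j (P (R k)) :=
        Derivation.map_sub (D := pderiv j) (a := R k) (b := P (R k))
      have h1 : P (pderiv j (R k)) = C (-(Complex.I * (k : ℂ))) *
          (if k - j ∈ F ∪ G then (if k - j ∈ G then 0 else X (k - j)) else 0) := by
        rw [hpd k j hj, hPmul, hPC, apply_ite P, hPzero, hPX]
      have h2 : P (pderiv j (P (R k))) = C (-(Complex.I * (k : ℂ))) *
          (if k - j ∈ F ∪ G ∧ j ∉ G ∧ k - j ∉ G then (if k - j ∈ G then 0 else X (k - j)) else 0) := by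
        rw [hpdP j hj, hPmul, hPC, apply_ite P, hPzero, hPX]
      rw [hPmul, hsub, hPsub, h1, h2]
      congr 1
      rw [← mul_sub]
      congr 1
      by_cases h3 : j ∈ G
      · by_cases h1 : k - j ∈ F ∪ G
        · by_cases h2 : k - j ∈ G
          · have hnF : k - j ∉ F := fun h => hFnG h h2
            simp [h1, h2, h3, hnF]
          · have hF : k - j ∈ F := (Finset.mem_union.mp h1).resolve_right h2
            simp [h1, h2, h3, hF]
        · have hnF : k - j ∉ F := fun h => h1 (Finset.mem_union_left _ h)
          simp [h1, hnF]
      · by_cases h1 : k - j ∈ F ∪ G <;> by_cases h2 : k - j ∈ G <;> simp [h1, h2, h3]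
    rw [Finset.sum_congr rfl key, hT, Finset.mul_sum]
    rw [← Finset.sum_subset (fun x (hx : x ∈ G) => Finset.mem_union_right F hx)
      (fun x _ hx => by
        rw [if_neg (fun hc => hx hc.1), mul_zero, mul_zero])]
    refine Finset.sum_congr rfl fun q hq => ?_
    simp only [hq, true_and]
    split_ifs with h
    · ring
    · simp
  calc P (L (L (X k) - P (L (X k)))) = P (L (R k - P (R k))) := by rw [hLX k (hFS hk)]
    _ = T := hLHS
    _ = _ := hRHS.symm
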